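/- Let p ≥ 1, X a nonempty type, f : X → ℝ^p, and Y := f(X), and suppose Assumption A holds for Y (Y is nonempty, bounded below, and Y↑ is closed). Let S := ⋃_{y ∈ Y_ESN} ext(Λ(y)), the union over all extreme-supported nondominated points y of the set of extreme points of Λ(y). Then X_SE = X_E ∩ ⋃_{λ ∈ S} X_λ, i.e., a solution is supported efficient if and only if it is efficient and optimal for the weighted-sum problem of some weight in S. -/

import Mathlib

open Set Pointwise Finset

/-- The set of points of `A` that are nondominated in `A` (componentwise order). -/
def nonDomPts (p : ℕ) (A : Set (Fin p → ℝ)) : Set (Fin p → ℝ) :=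
  {y | y ∈ A ∧ ∀ y' ∈ A, y' ≤ y → y' = y}

/-- The upper image `Y↑ = conv Y + ℝ≥0^p`. -/
def upImage (p : ℕ) (Y : Set (Fin p → ℝ)) : Set (Fin p → ℝ) :=
  convexHull ℝ Y + {r : Fin p → ℝ | 0 ≤ r}

/-- Extreme-supported nondominated points of `Y`. -/
def ESN (p : ℕ) (Y : Set (Fin p → ℝ)) : Set (Fin p → ℝ) :=
  {y | y ∈ nonDomPts p Y ∧ y ∈ Set.extremePoints ℝ (convexHull ℝ Y)}

/-- The weight set component `Λ(y)` of a point `y`. -/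
def wsc (p : ℕ) (Y : Set (Fin p → ℝ)) (y : Fin p → ℝ) : Set (Fin p → ℝ) :=
  {l ∈ stdSimplex ℝ (Fin p) | ∀ y' ∈ Y, ∑ i, l i * y i ≤ ∑ i, l i * y' i}

/-! ### Auxiliary lemmas -/

lemma combo_eq {a b u v u' v' : ℝ} (ha : 0 < a) (hb : 0 < b) (h1 : u' ≤ u) (h2 : v' ≤ v)
    (h : a*u + b*v = a*u' + b*v') : u = u' ∧ v = v' := by
  constructor <;> nlinarith

lemma Lcomb {p : ℕ} (l z1 z2 : Fin p → ℝ) (a c : ℝ) :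
    ∑ i, l i * (a • z1 + c • z2) i = a * ∑ i, l i * z1 i + c * ∑ i, l i * z2 i := by
  simp [mul_add, Finset.sum_add_distrib, Finset.mul_sum, mul_left_comm, mul_comm, mul_assoc]

lemma Lcomb' {p : ℕ} (l1 l2 z : Fin p → ℝ) (a c : ℝ) :
    ∑ i, (a • l1 + c • l2) i * z i = a * ∑ i, l1 i * z i + c * ∑ i, l2 i * z i := by
  simp [add_mul, Finset.sum_add_distrib, Finset.mul_sum, mul_assoc]

lemma contL {p : ℕ} (c : Fin p → ℝ) : Continuous (fun l : Fin p → ℝ => ∑ i, l i * c i) :=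
  continuous_finset_sum _ fun i _ => (continuous_apply i).mul continuous_const

lemma contR {p : ℕ} (l : Fin p → ℝ) : Continuous (fun z : Fin p → ℝ => ∑ i, l i * z i) :=
  continuous_finset_sum _ fun i _ => continuous_const.mul (continuous_apply i)

lemma isLinR {p : ℕ} (l : Fin p → ℝ) :
    IsLinearMap ℝ (fun z : Fin p → ℝ => ∑ i, l i * z i) := by
  constructor
  · intro u v; simp [mul_add, Finset.sum_add_distrib]
  · intro a u; simp [Finset.mul_sum, mul_left_comm]

lemma isLinSum {p : ℕ} : IsLinearMap ℝ (fun z : Fin p → ℝ => ∑ i, z i) := by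
  constructor
  · intro u v; simp [Finset.sum_add_distrib]
  · intro a u; simp [Finset.mul_sum]

lemma hull_subset_up {p : ℕ} (Y : Set (Fin p → ℝ)) : convexHull ℝ Y ⊆ upImage p Y := by
  intro c hc; exact ⟨c, hc, 0, Set.mem_setOf.2 (le_refl 0), add_zero c⟩

lemma Y_subset_up {p : ℕ} (Y : Set (Fin p → ℝ)) : Y ⊆ upImage p Y :=
  (subset_convexHull ℝ Y).trans (hull_subset_up Y)

lemma up_add_nonneg {p : ℕ} {Y : Set (Fin p → ℝ)} {z r : Fin p → ℝ}
    (hz : z ∈ upImage p Y) (hr : 0 ≤ r) : z + r ∈ upImage p Y := by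
  obtain ⟨c, hc, s, hs, rfl⟩ := hz
  exact ⟨c, hc, s + r, Set.mem_setOf.2 (add_nonneg hs hr), by ext i; simp only [Pi.add_apply]; ring⟩

lemma up_convex {p : ℕ} (Y : Set (Fin p → ℝ)) : Convex ℝ (upImage p Y) :=
  (convex_convexHull ℝ Y).add (convex_Ici (0 : Fin p → ℝ))

lemma up_ge {p : ℕ} {Y : Set (Fin p → ℝ)} {b : Fin p → ℝ} (hb : ∀ y ∈ Y, b ≤ y) :
    ∀ z ∈ upImage p Y, b ≤ z := by
  rintro z ⟨c, hc, r, hr, rfl⟩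
  have hc' : c ∈ Set.Ici b := convexHull_min hb (convex_Ici b) hc
  calc b ≤ c := hc'
    _ ≤ c + r := le_add_of_nonneg_right hr

lemma Lmin {p : ℕ} {Y : Set (Fin p → ℝ)} {l : Fin p → ℝ} (hl : ∀ i, 0 ≤ l i)
    {y0 : Fin p → ℝ} (hy0 : ∀ y' ∈ Y, ∑ i, l i * y0 i ≤ ∑ i, l i * y' i) :
    ∀ z ∈ upImage p Y, ∑ i, l i * y0 i ≤ ∑ i, l i * z i := by
  rintro z ⟨c, hc, r, hr, rfl⟩
  have hconv : Convex ℝ {w : Fin p → ℝ | ∑ i, l i * y0 i ≤ ∑ i, l i * w i} :=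
    convex_halfSpace_ge (isLinR l) _
  have hc' : ∑ i, l i * y0 i ≤ ∑ i, l i * c i := convexHull_min hy0 hconv hc
  have hr' : 0 ≤ ∑ i, l i * r i :=
    Finset.sum_nonneg fun i _ => mul_nonneg (hl i) (hr i)
  have : ∑ i, l i * (c + r) i = ∑ i, l i * c i + ∑ i, l i * r i := by
    simp [mul_add, Finset.sum_add_distrib]
  linarith

lemma half_seg {p : ℕ} (u v : Fin p → ℝ) :
    (1/2 : ℝ) • u + (1/2 : ℝ) • v ∈ openSegment ℝ u v :=
  ⟨1/2, 1/2, by norm_num, by norm_num, by norm_num, rfl⟩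

lemma ext_up_ESN {p : ℕ} {Y : Set (Fin p → ℝ)} {y : Fin p → ℝ}
    (hy : y ∈ Set.extremePoints ℝ (upImage p Y)) : y ∈ ESN p Y := by
  obtain ⟨hyU, hext⟩ := hy
  obtain ⟨c, hc, r, hr, hcr⟩ := hyU
  have hr0 : (0:Fin p → ℝ) ≤ r := hr
  have hcU : c ∈ upImage p Y := hull_subset_up Y hc
  have hc2U : c + (2:ℝ) • r ∈ upImage p Y :=
    up_add_nonneg hcU (by positivity)
  have hseg : y ∈ openSegment ℝ c (c + (2:ℝ) • r) := by
    have h := half_seg c (c + (2:ℝ) • r)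
    have e : (1/2 : ℝ) • c + (1/2 : ℝ) • (c + (2:ℝ) • r) = y := by rw [← hcr]; module
    rwa [e] at h
  have hcy : c = y := hext hcU hc2U hseg
  have hyhull : y ∈ convexHull ℝ Y := hcy ▸ hc
  have hexthull : y ∈ Set.extremePoints ℝ (convexHull ℝ Y) := by
    refine ⟨hyhull, fun z1 h1 z2 h2 hs => ?_⟩
    exact hext (hull_subset_up Y h1) (hull_subset_up Y h2) hs
  have hyY : y ∈ Y := extremePoints_convexHull_subset hexthull
  refine ⟨⟨hyY, fun y' hy' hle => ?_⟩, hexthull⟩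
  have h2 : y + (y - y') ∈ upImage p Y :=
    up_add_nonneg (Y_subset_up Y hyY) (by simpa [sub_nonneg] using hle)
  have hseg2 : y ∈ openSegment ℝ y' (y + (y - y')) := by
    have h := half_seg y' (y + (y - y'))
    have e : (1/2 : ℝ) • y' + (1/2 : ℝ) • (y + (y - y')) = y := by module
    rwa [e] at h
  exact hext (Y_subset_up Y hy') h2 hseg2

lemma wsc_closed {p : ℕ} (Y : Set (Fin p → ℝ)) (y : Fin p → ℝ) : IsClosed (wsc p Y y) := by
  have : wsc p Y y = stdSimplex ℝ (Fin p) ∩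
      ⋂ y' ∈ Y, {l : Fin p → ℝ | ∑ i, l i * y i ≤ ∑ i, l i * y' i} := by
    ext l; simp [wsc, Set.mem_iInter]
  rw [this]
  exact (isClosed_stdSimplex ℝ (Fin p)).inter (isClosed_biInter fun y' _ =>
    isClosed_le (contL y) (contL y'))

lemma wsc_extreme_exists {p : ℕ} (Y : Set (Fin p → ℝ)) (y : Fin p → ℝ)
    (hne : (wsc p Y y).Nonempty) : ∃ l, l ∈ Set.extremePoints ℝ (wsc p Y y) := by
  have hcomp : IsCompact (wsc p Y y) :=
    (isCompact_stdSimplex ℝ (Fin p)).of_isClosed_subset (wsc_closed Y y) (fun l hl => hl.1)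
  exact hcomp.extremePoints_nonempty hne

theorem stmt_9 (p : ℕ) (hp : 1 ≤ p) (X : Type*) [Nonempty X] (f : X → Fin p → ℝ)
    (b : Fin p → ℝ) (hb : ∀ y ∈ Set.range f, b ≤ y)
    (hclosed : IsClosed (upImage p (Set.range f))) :
    -- X_SE = X_E ∩ ⋃_{λ ∈ S} X_λ where S = ⋃_{y ∈ Y_ESN} ext Λ(y)
    {x : X | f x ∈ nonDomPts p (Set.range f) ∧
        ∃ l ∈ stdSimplex ℝ (Fin p), ∀ x'' : X, ∑ i, l i * f x i ≤ ∑ i, l i * f x'' i}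
      = {x : X | f x ∈ nonDomPts p (Set.range f)} ∩
        ⋃ l ∈ ⋃ y ∈ ESN p (Set.range f), Set.extremePoints ℝ (wsc p (Set.range f) y),
          {x : X | ∀ x'' : X, ∑ i, l i * f x i ≤ ∑ i, l i * f x'' i} := by
  ext x
  simp only [Set.mem_setOf_eq, Set.mem_inter_iff, Set.mem_iUnion, exists_prop]
  constructor
  · rintro ⟨hE, l0, hl0s, hl0opt⟩
    refine ⟨hE, ?_⟩
    set Y := Set.range f with hYdef
    set U := upImage p Y with hUdef
    have hl0W : l0 ∈ wsc p Y (f x) := ⟨hl0s, by rintro y' ⟨x'', rfl⟩; exact hl0opt x''⟩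
    obtain ⟨l, hlW⟩ := wsc_extreme_exists Y (f x) ⟨l0, hl0W⟩
    have hlmem : l ∈ wsc p Y (f x) := extremePoints_subset hlW
    have hl0' : ∀ i, 0 ≤ l i := hlmem.1.1
    have hlopt : ∀ y' ∈ Y, ∑ i, l i * f x i ≤ ∑ i, l i * y' i := hlmem.2
    have hUmin : ∀ z ∈ U, ∑ i, l i * f x i ≤ ∑ i, l i * z i := Lmin hl0' hlopt
    set s0 := ∑ i, f x i with hs0
    set K := U ∩ {z | ∑ i, l i * z i = ∑ i, l i * f x i} ∩ {z | ∑ i, z i ≤ s0} with hKdef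
    have hfxU : f x ∈ U := Y_subset_up Y ⟨x, rfl⟩
    have hfxK : f x ∈ K := ⟨⟨hfxU, rfl⟩, Set.mem_setOf.2 hs0.ge⟩
    have hKclosed : IsClosed K :=
      (hclosed.inter (isClosed_eq (contR l) continuous_const)).inter
        (isClosed_le (continuous_finset_sum _ fun i _ => continuous_apply i) continuous_const)
    have hbU : ∀ z ∈ U, b ≤ z := up_ge hb
    set c' : Fin p → ℝ := fun i => s0 - ∑ j, b j + b i with hc'def
    have hsub : K ⊆ Set.Icc b c' := by
      rintro z ⟨⟨hzU, _⟩, hzs⟩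
      refine ⟨hbU z hzU, fun i => ?_⟩
      have h1 : ∑ j, z j ≤ s0 := hzs
      have h2 : ∀ j, b j ≤ z j := hbU z hzU
      have e1 : z i + ∑ j ∈ Finset.univ.erase i, z j = ∑ j, z j :=
        Finset.add_sum_erase _ _ (Finset.mem_univ i)
      have e2 : b i + ∑ j ∈ Finset.univ.erase i, b j = ∑ j, b j :=
        Finset.add_sum_erase _ _ (Finset.mem_univ i)
      have h3 : ∑ j ∈ Finset.univ.erase i, b j ≤ ∑ j ∈ Finset.univ.erase i, z j :=
        Finset.sum_le_sum fun j _ => h2 j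
      simp only [hc'def]
      linarith
    have hKcomp : IsCompact K := IsCompact.of_isClosed_subset isCompact_Icc hKclosed hsub
    obtain ⟨zs, hzsK, hzsmin⟩ :=
      hKcomp.exists_isMinOn ⟨f x, hfxK⟩
        ((continuous_finset_sum Finset.univ
          (fun i _ => continuous_apply i)).continuousOn (s := K))
    rw [isMinOn_iff] at hzsmin
    set m := ∑ i, zs i with hmdef
    have hms0 : m ≤ s0 := hzsK.2
    have hFmin : ∀ z ∈ U, (∑ i, l i * z i = ∑ i, l i * f x i) → m ≤ ∑ i, z i := by
      intro z hzU hzl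
      by_cases h : ∑ i, z i ≤ s0
      · exact hzsmin z ⟨⟨hzU, hzl⟩, h⟩
      · linarith
    set F' := U ∩ {z | ∑ i, l i * z i = ∑ i, l i * f x i} ∩ {z | ∑ i, z i = m} with hF'def
    have hF'subK : F' ⊆ K := by
      rintro z ⟨⟨h1, h2⟩, h3⟩
      exact ⟨⟨h1, h2⟩, by rw [Set.mem_setOf_eq, h3]; exact hms0⟩
    have hF'closed : IsClosed F' :=
      (hclosed.inter (isClosed_eq (contR l) continuous_const)).inter
        (isClosed_eq (continuous_finset_sum _ fun i _ => continuous_apply i) continuous_const)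
    have hF'comp : IsCompact F' := hKcomp.of_isClosed_subset hF'closed hF'subK
    have hF'ne : F'.Nonempty := ⟨zs, ⟨hzsK.1, rfl⟩⟩
    obtain ⟨y, hyF'⟩ := hF'comp.extremePoints_nonempty hF'ne
    have hyU : y ∈ U := hyF'.1.1.1
    have hyl : ∑ i, l i * y i = ∑ i, l i * f x i := hyF'.1.1.2
    have hysum : ∑ i, y i = m := hyF'.1.2
    -- y is an extreme point of U
    have hyextU : y ∈ Set.extremePoints ℝ U := by
      refine ⟨hyU, fun z1 h1 z2 h2 hs => ?_⟩
      obtain ⟨a, cc, ha, hcc, hac, hsum⟩ := hs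
      have e1 : a * (∑ i, l i * z1 i) + cc * (∑ i, l i * z2 i) = ∑ i, l i * f x i := by
        rw [← hyl, ← hsum, Lcomb]
      have e1' : a * (∑ i, l i * f x i) + cc * (∑ i, l i * f x i) = ∑ i, l i * f x i := by
        rw [← add_mul, hac, one_mul]
      obtain ⟨hz1l, hz2l⟩ := combo_eq ha hcc (hUmin z1 h1) (hUmin z2 h2) (by linarith)
      have e2 : a * (∑ i, z1 i) + cc * (∑ i, z2 i) = m := by
        rw [← hysum, ← hsum]
        simp [Finset.sum_add_distrib, Finset.mul_sum]
      have e2' : a * m + cc * m = m := by rw [← add_mul, hac, one_mul]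
      obtain ⟨hz1s, hz2s⟩ := combo_eq ha hcc (hFmin z1 h1 hz1l) (hFmin z2 h2 hz2l)
        (by linarith)
      exact hyF'.2 ⟨⟨h1, hz1l⟩, hz1s⟩ ⟨⟨h2, hz2l⟩, hz2s⟩ ⟨a, cc, ha, hcc, hac, hsum⟩
    have hyESN : y ∈ ESN p Y := ext_up_ESN hyextU
    -- l is an extreme point of wsc p Y y
    have hlwy : l ∈ Set.extremePoints ℝ (wsc p Y y) := by
      refine ⟨⟨hlmem.1, fun y'' hy'' => ?_⟩, ?_⟩
      · rw [hyl]; exact hlopt y'' hy''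
      · intro l1 hl1 l2 hl2 hs
        obtain ⟨a, cc, ha, hcc, hac, hsum⟩ := hs
        have hfxY : f x ∈ Y := ⟨x, rfl⟩
        have h1fx : ∑ i, l1 i * y i ≤ ∑ i, l1 i * f x i := hl1.2 (f x) hfxY
        have h2fx : ∑ i, l2 i * y i ≤ ∑ i, l2 i * f x i := hl2.2 (f x) hfxY
        have e1 : a * (∑ i, l1 i * f x i) + cc * (∑ i, l2 i * f x i) =
            ∑ i, l i * f x i := by rw [← hsum, Lcomb']
        have e2 : a * (∑ i, l1 i * y i) + cc * (∑ i, l2 i * y i) =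
            ∑ i, l i * y i := by rw [← hsum, Lcomb']
        obtain ⟨hq1, hq2⟩ := combo_eq ha hcc h1fx h2fx (by linarith)
        have hl1W : l1 ∈ wsc p Y (f x) :=
          ⟨hl1.1, fun y'' hy'' => by rw [hq1]; exact hl1.2 y'' hy''⟩
        have hl2W : l2 ∈ wsc p Y (f x) :=
          ⟨hl2.1, fun y'' hy'' => by rw [hq2]; exact hl2.2 y'' hy''⟩
        exact hlW.2 hl1W hl2W ⟨a, cc, ha, hcc, hac, hsum⟩
    exact ⟨l, ⟨y, hyESN, hlwy⟩, fun x'' => hlopt (f x'') ⟨x'', rfl⟩⟩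
  · rintro ⟨hE, l, ⟨y, hyESN, hlwy⟩, hopt⟩
    exact ⟨hE, l, (extremePoints_subset hlwy).1, hopt⟩
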